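/- Let w_1, …, w_m ∈ ℝ^M and let K := { Σ_{i=1}^m λ_i w_i : λ_i ≥ 0 for all i } be the finitely generated convex cone they span. Then there exists a constant C' > 0 such that every v ∈ K can be written as v = Σ_{i=1}^m λ_i w_i with 0 ≤ λ_i ≤ C'·‖v‖ for all i, where ‖·‖ is the Euclidean norm. -/

import Mathlib

noncomputable section

open Finset

/-- Bound lemma: for a linearly independent subfamily, coefficients supported on it
are bounded linearly by the norm of the combination. -/
lemma cone_key {M m : ℕ} (w : Fin m → EuclideanSpace ℝ (Fin M)) (s : Finset (Fin m))
    (h : LinearIndependent ℝ fun i : ↥s => w i) :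
    ∃ C : ℝ, 0 ≤ C ∧ ∀ lam : Fin m → ℝ, (∀ i ∉ s, lam i = 0) →
      ∀ i, |lam i| ≤ C * ‖∑ i, lam i • w i‖ := by
  let T : (↥s → ℝ) →ₗ[ℝ] EuclideanSpace ℝ (Fin M) :=
    { toFun := fun g => ∑ i : ↥s, g i • w i
      map_add' := by intro a b; simp [add_smul, Finset.sum_add_distrib]
      map_smul' := by intro c a; simp [Finset.smul_sum, smul_smul] }
  have hinj : Function.Injective T := by
    rw [← LinearMap.ker_eq_bot, LinearMap.ker_eq_bot']
    intro g hg
    funext i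
    exact Fintype.linearIndependent_iff.mp h g hg i
  let e := LinearEquiv.ofInjective T hinj
  let f : ↥(LinearMap.range T) →L[ℝ] (↥s → ℝ) :=
    LinearMap.toContinuousLinearMap e.symm.toLinearMap
  refine ⟨‖f‖, f.opNorm_nonneg, ?_⟩
  intro lam hlam i
  set g : ↥s → ℝ := fun j => lam ↑j with hgdef
  have hsum : ∑ j, lam j • w j = T g := by
    have h1 : ∑ j ∈ s, lam j • w j = ∑ j, lam j • w j :=
      Finset.sum_subset (Finset.subset_univ s) (fun j _ hj => by rw [hlam j hj, zero_smul])
    have h2 : T g = ∑ j ∈ s, lam j • w j := by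
      show ∑ j : ↥s, lam ↑j • w ↑j = _
      exact Finset.sum_attach s (fun j => lam j • w j)
    rw [h2, h1]
  have hgf : g = f ⟨T g, LinearMap.mem_range_self T g⟩ := by
    have h3 : (⟨T g, LinearMap.mem_range_self T g⟩ : ↥(LinearMap.range T)) = e g :=
      Subtype.ext (LinearEquiv.ofInjective_apply T (h := hinj) g).symm
    have h4 : f (e g) = e.symm (e g) := rfl
    rw [h3, h4, LinearEquiv.symm_apply_apply]
  have hbound : ‖g‖ ≤ ‖f‖ * ‖∑ j, lam j • w j‖ := by
    calc ‖g‖ = ‖f ⟨T g, LinearMap.mem_range_self T g⟩‖ := by rw [← hgf]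
    _ ≤ ‖f‖ * ‖(⟨T g, LinearMap.mem_range_self T g⟩ : ↥(LinearMap.range T))‖ :=
        f.le_opNorm _
    _ = ‖f‖ * ‖T g‖ := rfl
    _ = ‖f‖ * ‖∑ j, lam j • w j‖ := by rw [hsum]
  by_cases hi : i ∈ s
  · have h5 : |lam i| = ‖g ⟨i, hi⟩‖ := (Real.norm_eq_abs _).symm
    calc |lam i| = ‖g ⟨i, hi⟩‖ := h5
    _ ≤ ‖g‖ := norm_le_pi_norm g ⟨i, hi⟩
    _ ≤ ‖f‖ * ‖∑ j, lam j • w j‖ := hbound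
  · rw [hlam i hi]
    simp only [abs_zero]
    positivity

/-- Carathéodory for cones: every nonnegative combination can be rewritten as a
nonnegative combination supported on a linearly independent subfamily. -/
lemma cone_carath {M m : ℕ} (w : Fin m → EuclideanSpace ℝ (Fin M)) :
    ∀ n : ℕ, ∀ lam : Fin m → ℝ, (∀ i, 0 ≤ lam i) →
      (Finset.univ.filter fun i => lam i ≠ 0).card ≤ n →
      ∃ mu : Fin m → ℝ, (∀ i, 0 ≤ mu i) ∧ (∑ i, mu i • w i = ∑ i, lam i • w i) ∧
        LinearIndependent ℝ fun i : ↥(Finset.univ.filter fun i => mu i ≠ 0) => w i := by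
  intro n
  induction n with
  | zero =>
    intro lam hlam hcard
    refine ⟨lam, hlam, rfl, ?_⟩
    have hempty : (Finset.univ.filter fun i => lam i ≠ 0) = ∅ :=
      Finset.card_eq_zero.mp (Nat.le_zero.mp hcard)
    rw [hempty]
    exact linearIndependent_empty_type
  | succ n ih =>
    intro lam hlam hcard
    set supp := Finset.univ.filter fun i => lam i ≠ 0 with hsupp
    by_cases hLI : LinearIndependent ℝ fun i : ↥supp => w i
    · exact ⟨lam, hlam, rfl, hLI⟩
    obtain ⟨g, hg0, j, hgj⟩ := Fintype.not_linearIndependent_iff.mp hLI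
    set c : Fin m → ℝ := fun i => if h : i ∈ supp then g ⟨i, h⟩ else 0 with hcdef
    have hc0 : ∑ i, c i • w i = 0 := by
      have h1 : ∑ i, c i • w i = ∑ i ∈ supp, c i • w i :=
        (Finset.sum_subset (Finset.subset_univ supp)
          (fun i _ hi => by rw [hcdef]; simp [dif_neg hi])).symm
      have h2 : ∑ i ∈ supp, c i • w i = ∑ i : ↥supp, c ↑i • w ↑i :=
        (Finset.sum_attach supp (fun i => c i • w i)).symm
      have h3 : ∑ i : ↥supp, c ↑i • w ↑i = ∑ i : ↥supp, g i • w ↑i := by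
        refine Finset.sum_congr rfl fun i _ => ?_
        rw [hcdef]; simp [dif_pos i.2]
      rw [h1, h2, h3, hg0]
    have hcsupp : ∀ i, c i ≠ 0 → lam i ≠ 0 := by
      intro i hci
      by_contra hli
      apply hci
      rw [hcdef]
      have : i ∉ supp := by simp [hsupp, hli]
      simp [dif_neg this]
    have hcne : ∃ i, c i ≠ 0 := ⟨↑j, by rw [hcdef]; simpa [dif_pos j.2] using hgj⟩
    obtain ⟨d, hd0, hdsupp, i₁, hdi₁⟩ :
        ∃ d : Fin m → ℝ, (∑ i, d i • w i = 0) ∧ (∀ i, d i ≠ 0 → lam i ≠ 0) ∧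
          ∃ i, 0 < d i := by
      by_cases hpos : ∃ i, 0 < c i
      · exact ⟨c, hc0, hcsupp, hpos⟩
      · push_neg at hpos
        obtain ⟨i₂, hi₂⟩ := hcne
        refine ⟨-c, by simp [Pi.neg_apply, neg_smul, Finset.sum_neg_distrib, hc0],
          fun i hi => hcsupp i (by simpa using hi), i₂, ?_⟩
        have := hpos i₂
        simp only [Pi.neg_apply]
        cases lt_or_eq_of_le this with
        | inl h => linarith
        | inr h => exact absurd h hi₂
    have hPne : (Finset.univ.filter fun i => 0 < d i).Nonempty :=
      ⟨i₁, by simp [hdi₁]⟩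
    obtain ⟨i₀, hi₀P, hmin⟩ :=
      Finset.exists_min_image (Finset.univ.filter fun i => 0 < d i)
        (fun i => lam i / d i) hPne
    have hdi₀ : 0 < d i₀ := by simpa using (Finset.mem_filter.mp hi₀P).2
    set t := lam i₀ / d i₀ with htdef
    have ht : 0 ≤ t := div_nonneg (hlam i₀) hdi₀.le
    set lam' : Fin m → ℝ := fun i => lam i - t * d i with hlam'def
    have hlam' : ∀ i, 0 ≤ lam' i := by
      intro i
      by_cases hd : 0 < d i
      · have h1 : t ≤ lam i / d i := hmin i (by simp [hd])
        have h2 : t * d i ≤ lam i := (le_div_iff₀ hd).mp h1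
        simp only [hlam'def]
        linarith
      · have h1 : d i ≤ 0 := not_lt.mp hd
        have h2 : t * d i ≤ 0 := mul_nonpos_iff.mpr (Or.inl ⟨ht, h1⟩)
        have := hlam i
        simp only [hlam'def]
        linarith
    have hsum' : ∑ i, lam' i • w i = ∑ i, lam i • w i := by
      have h1 : ∑ i, (t * d i) • w i = (0 : EuclideanSpace ℝ (Fin M)) := by
        calc ∑ i, (t * d i) • w i = ∑ i, t • (d i • w i) := by
              refine Finset.sum_congr rfl fun i _ => ?_; rw [smul_smul]
        _ = t • ∑ i, d i • w i := (Finset.smul_sum).symm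
        _ = 0 := by rw [hd0, smul_zero]
      calc ∑ i, lam' i • w i
          = ∑ i, (lam i • w i - (t * d i) • w i) := by
            refine Finset.sum_congr rfl fun i _ => ?_
            rw [hlam'def]; rw [sub_smul]
      _ = ∑ i, lam i • w i - ∑ i, (t * d i) • w i := Finset.sum_sub_distrib _ _
      _ = ∑ i, lam i • w i := by rw [h1, sub_zero]
    have hlam'i₀ : lam' i₀ = 0 := by
      simp only [hlam'def, htdef]
      rw [div_mul_cancel₀ _ hdi₀.ne']
      ring
    have hi₀supp : i₀ ∈ supp := by
      simp only [hsupp, Finset.mem_filter, Finset.mem_univ, true_and]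
      exact hdsupp i₀ hdi₀.ne'
    have hsub : (Finset.univ.filter fun i => lam' i ≠ 0) ⊆ supp.erase i₀ := by
      intro i hi
      have hne : lam' i ≠ 0 := (Finset.mem_filter.mp hi).2
      refine Finset.mem_erase.mpr ⟨fun h => hne (h ▸ hlam'i₀), ?_⟩
      simp only [hsupp, Finset.mem_filter, Finset.mem_univ, true_and]
      by_cases hd : d i = 0
      · intro hl
        apply hne
        simp [hlam'def, hd, hl]
      · exact hdsupp i hd
    have hcard' : (Finset.univ.filter fun i => lam' i ≠ 0).card ≤ n := by
      have h1 := Finset.card_le_card hsub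
      have h2 := Finset.card_erase_of_mem hi₀supp
      omega
    obtain ⟨mu, hmu0, hmusum, hmuLI⟩ := ih lam' hlam' hcard'
    exact ⟨mu, hmu0, hmusum.trans hsum', hmuLI⟩

/-- Points of a finitely generated convex cone admit conic representations
whose coefficients are bounded linearly in the norm of the point, with a
uniform constant. -/
theorem cone_bounded_coefficients {M m : ℕ}
    (w : Fin m → EuclideanSpace ℝ (Fin M)) :
    ∃ C' > 0, ∀ v : EuclideanSpace ℝ (Fin M),
      (∃ lam : Fin m → ℝ, (∀ i, 0 ≤ lam i) ∧ v = ∑ i, lam i • w i) →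
      ∃ mu : Fin m → ℝ, (∀ i, 0 ≤ mu i ∧ mu i ≤ C' * ‖v‖) ∧
        v = ∑ i, mu i • w i := by
  have hC : ∀ s : Finset (Fin m), ∃ C : ℝ, 0 ≤ C ∧
      ((LinearIndependent ℝ fun i : ↥s => w i) →
        ∀ lam : Fin m → ℝ, (∀ i ∉ s, lam i = 0) →
          ∀ i, |lam i| ≤ C * ‖∑ i, lam i • w i‖) := by
    intro s
    by_cases h : LinearIndependent ℝ fun i : ↥s => w i
    · obtain ⟨C, hC0, hCb⟩ := cone_key w s h
      exact ⟨C, hC0, fun _ => hCb⟩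
    · exact ⟨0, le_refl _, fun h' => absurd h' h⟩
  choose C hC0 hCb using hC
  have hsumC : 0 ≤ ∑ s : Finset (Fin m), C s :=
    Finset.sum_nonneg fun s _ => hC0 s
  refine ⟨1 + ∑ s : Finset (Fin m), C s, by linarith, ?_⟩
  rintro v ⟨lam, hlam, hv⟩
  have hcard : (Finset.univ.filter fun i => lam i ≠ 0).card ≤ m :=
    le_trans (Finset.card_le_univ _) (le_of_eq (Finset.card_fin m))
  obtain ⟨mu, hmu0, hmusum, hLI⟩ := cone_carath w m lam hlam hcard
  set s := Finset.univ.filter fun i => mu i ≠ 0 with hsdef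
  have hzero : ∀ i ∉ s, mu i = 0 := by
    intro i hi
    by_contra h
    exact hi (by simp [hsdef, h])
  have hvmu : v = ∑ i, mu i • w i := hv.trans hmusum.symm
  refine ⟨mu, fun i => ⟨hmu0 i, ?_⟩, hvmu⟩
  have hb := hCb s hLI mu hzero i
  rw [← hvmu] at hb
  have h1 : C s ≤ 1 + ∑ s : Finset (Fin m), C s := by
    have := Finset.single_le_sum (f := C) (fun s _ => hC0 s) (Finset.mem_univ s)
    linarith
  calc mu i ≤ |mu i| := le_abs_self _
  _ ≤ C s * ‖v‖ := hb
  _ ≤ (1 + ∑ s : Finset (Fin m), C s) * ‖v‖ :=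
      mul_le_mul_of_nonneg_right h1 (norm_nonneg v)

end
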